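/- For any integer u ≥ 1 and any divisor δ of u, the sum over square-free positive integers d with gcd(d,u) = δ of μ(d)/d² equals (μ(δ)/δ²)·(ζ(2)·∏_{π prime, π∣u}(1 − 1/π²))⁻¹. -/

import Mathlib

open ArithmeticFunction
open scoped Classical

noncomputable def mgAux (u : ℕ) : ℕ → ℝ :=
  fun n => if Nat.gcd n u = 1 then (moebius n : ℝ) / (n : ℝ) ^ 2 else 0

lemma mgAux_zero (u : ℕ) : mgAux u 0 = 0 := by simp [mgAux]

lemma mgAux_one (u : ℕ) : mgAux u 1 = 1 := by simp [mgAux]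

lemma mgAux_mul (u : ℕ) {m n : ℕ} (h : Nat.Coprime m n) :
    mgAux u (m * n) = mgAux u m * mgAux u n := by
  unfold mgAux
  rcases eq_or_ne (Nat.gcd m u) 1 with hm | hm
  · rcases eq_or_ne (Nat.gcd n u) 1 with hn | hn
    · rw [if_pos (Nat.Coprime.mul hm hn), if_pos hm, if_pos hn,
        isMultiplicative_moebius.map_mul_of_coprime h]
      push_cast
      rw [mul_pow, ← div_mul_div_comm]
    · rw [if_neg, if_neg hn, mul_zero]
      exact fun hc => hn (Nat.Coprime.coprime_dvd_left (dvd_mul_left n m) hc)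
  · rw [if_neg, if_neg hm, zero_mul]
    exact fun hc => hm (Nat.Coprime.coprime_dvd_left (dvd_mul_right m n) hc)

lemma summable_inv_sq : Summable (fun n : ℕ => ((n : ℝ) ^ 2)⁻¹) := by
  exact Real.summable_nat_pow_inv.mpr one_lt_two

lemma mgAux_norm_summable (u : ℕ) : Summable (fun n => ‖mgAux u n‖) := by
  refine Summable.of_nonneg_of_le (fun n => norm_nonneg _) (fun n => ?_) summable_inv_sq
  unfold mgAux
  split_ifs with h
  · have h1 : |(moebius n : ℝ)| ≤ 1 := by exact_mod_cast (abs_moebius_le_one (n := n))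
    rw [Real.norm_eq_abs, abs_div, abs_pow, Nat.abs_cast, div_eq_mul_inv]
    exact mul_le_of_le_one_left (by positivity) h1
  · simp

lemma mgAux_hasProd (u : ℕ) :
    HasProd (fun p : Nat.Primes => if (p : ℕ) ∣ u then (1 : ℝ) else 1 - ((p : ℝ) ^ 2)⁻¹)
      (∑' n, mgAux u n) := by
  have h := EulerProduct.eulerProduct_hasProd (f := mgAux u) (mgAux_one u)
    (fun {m n} h => mgAux_mul u h) (mgAux_norm_summable u) (mgAux_zero u)
  convert h using 2 with p
  case e'_3 => rfl
  rw [tsum_eq_sum (s := Finset.range 2) ?_]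
  · rw [Finset.sum_range_succ, Finset.sum_range_one, pow_zero, pow_one, mgAux_one]
    unfold mgAux
    rcases Classical.em ((p : ℕ) ∣ u) with hd | hd
    · rw [if_pos hd, if_neg, add_zero]
      exact fun hc => ((Nat.Prime.coprime_iff_not_dvd p.2).mp hc) hd
    · rw [if_neg hd, if_pos ((Nat.Prime.coprime_iff_not_dvd p.2).mpr hd),
        moebius_apply_prime p.2]
      push_cast
      ring
  · intro e he
    simp only [Finset.mem_range, not_lt] at he
    have he0 : e ≠ 0 := by omega
    have he1 : e ≠ 1 := by omega
    unfold mgAux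
    rw [moebius_apply_prime_pow p.2 he0, if_neg he1]
    simp

noncomputable def invSqHom : ℕ →*₀ ℝ where
  toFun n := ((n : ℝ) ^ 2)⁻¹
  map_zero' := by simp
  map_one' := by simp
  map_mul' m n := by push_cast; rw [mul_pow, mul_inv]

lemma hasProd_zeta_two :
    HasProd (fun p : Nat.Primes => (1 - ((p : ℝ) ^ 2)⁻¹)⁻¹) (Real.pi ^ 2 / 6) := by
  have hs : Summable (fun n => ‖invSqHom n‖) := by
    refine summable_inv_sq.congr fun n => ?_
    simp [invSqHom, Real.norm_eq_abs, abs_of_nonneg]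
  have h := EulerProduct.eulerProduct_completely_multiplicative_hasProd (f := invSqHom) hs
  have ht : ∑' n, invSqHom n = Real.pi ^ 2 / 6 := by
    rw [← hasSum_zeta_two.tsum_eq]
    exact tsum_congr fun n => by simp [invSqHom, one_div]
  rw [ht] at h
  exact h

lemma one_sub_inv_sq_ne_zero (p : Nat.Primes) : (1 : ℝ) - ((p : ℝ) ^ 2)⁻¹ ≠ 0 := by
  have h2 : (2 : ℝ) ≤ ((p : ℕ) : ℝ) := by exact_mod_cast p.2.two_le
  have hp1 : (1 : ℝ) < ((p : ℕ) : ℝ) ^ 2 := by nlinarith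
  have hlt : (((p : ℕ) : ℝ) ^ 2)⁻¹ < 1 := by
    rw [inv_lt_one_iff₀]; right; exact hp1
  intro hc
  have : ((p : ℝ) ^ 2)⁻¹ = (((p : ℕ) : ℝ) ^ 2)⁻¹ := rfl
  rw [this] at hc
  linarith

lemma hasProd_fin (u : ℕ) (hu : u ≠ 0) :
    HasProd (fun p : Nat.Primes => if (p : ℕ) ∣ u then 1 - ((p : ℝ) ^ 2)⁻¹ else 1)
      (∏ π ∈ u.primeFactors, (1 - ((π : ℝ) ^ 2)⁻¹)) := by
  set s : Finset Nat.Primes := u.primeFactors.attach.map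
    ⟨fun x => ⟨x.1, Nat.prime_of_mem_primeFactors x.2⟩,
     by intro a b h; exact Subtype.ext (congrArg (fun q : Nat.Primes => (q : ℕ)) h)⟩ with hs
  have hmem : ∀ p : Nat.Primes, p ∈ s ↔ (p : ℕ) ∈ u.primeFactors := by
    intro p
    simp only [hs, Finset.mem_map, Finset.mem_attach, Function.Embedding.coeFn_mk,
      true_and]
    constructor
    · rintro ⟨a, rfl⟩; exact a.2
    · intro hp; exact ⟨⟨(p : ℕ), hp⟩, Subtype.ext rfl⟩
  have hprod : ∏ p ∈ s, (if (p : ℕ) ∣ u then 1 - ((p : ℝ) ^ 2)⁻¹ else 1)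
      = ∏ π ∈ u.primeFactors, (1 - ((π : ℝ) ^ 2)⁻¹) := by
    rw [hs, Finset.prod_map]
    rw [← Finset.prod_attach u.primeFactors (fun π => (1 - ((π : ℝ) ^ 2)⁻¹))]
    refine Finset.prod_congr rfl fun x _ => ?_
    exact if_pos (Nat.dvd_of_mem_primeFactors x.2)
  rw [← hprod]
  refine hasProd_prod_of_ne_finset_one fun p hp => ?_
  rw [if_neg]
  intro hd
  exact hp ((hmem p).mpr (Nat.mem_primeFactors.mpr ⟨p.2, hd, hu⟩))

lemma mgAux_tsum_eq (u : ℕ) (hu : u ≠ 0) :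
    ∑' n, mgAux u n
      = ((Real.pi ^ 2 / 6) * ∏ π ∈ u.primeFactors, (1 - ((π : ℝ) ^ 2)⁻¹))⁻¹ := by
  have h := ((mgAux_hasProd u).mul (hasProd_fin u hu)).mul hasProd_zeta_two
  have heq : (fun p : Nat.Primes =>
      ((if (p : ℕ) ∣ u then (1 : ℝ) else 1 - ((p : ℝ) ^ 2)⁻¹) *
        (if (p : ℕ) ∣ u then 1 - ((p : ℝ) ^ 2)⁻¹ else 1)) * (1 - ((p : ℝ) ^ 2)⁻¹)⁻¹)
      = fun _ => (1 : ℝ) := by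
    funext p
    have hne := one_sub_inv_sq_ne_zero p
    split_ifs <;> simp [mul_inv_cancel₀ hne]
  rw [heq] at h
  have hone := h.unique hasProd_one
  refine eq_inv_of_mul_eq_one_left ?_
  linear_combination hone

/-- For u ≥ 1 and δ ∣ u, the sum over square-free positive d with
gcd(d,u) = δ of μ(d)/d² equals (μ(δ)/δ²)·(ζ(2)·∏_{π ∣ u prime}(1 − 1/π²))⁻¹. -/
theorem tsum_moebius_div_sq_gcd_eq
    (u δ : ℕ) (hu : 1 ≤ u) (hδ : δ ∣ u) :
    ∑' d : ℕ, (if Squarefree d ∧ Nat.gcd d u = δ then (moebius d : ℝ) / (d : ℝ) ^ 2 else 0) =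
      (moebius δ : ℝ) / (δ : ℝ) ^ 2 *
        ((Real.pi ^ 2 / 6) * ∏ π ∈ u.primeFactors, (1 - 1 / (π : ℝ) ^ 2))⁻¹ := by
  have hu0 : u ≠ 0 := by omega
  simp only [one_div]
  by_cases hδsq : Squarefree δ
  · have hδ0 : δ ≠ 0 := fun h => not_squarefree_zero (h ▸ hδsq)
    have hinj : Function.Injective (fun m : ℕ => δ * m) := fun a b h =>
      Nat.eq_of_mul_eq_mul_left (Nat.pos_of_ne_zero hδ0) h
    have hsupp : (Function.support fun d : ℕ =>
        if Squarefree d ∧ Nat.gcd d u = δ then (moebius d : ℝ) / (d : ℝ) ^ 2 else 0)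
        ⊆ Set.range fun m : ℕ => δ * m := by
      intro d hd
      have hcond : Squarefree d ∧ Nat.gcd d u = δ := by
        by_contra hc
        exact hd (if_neg hc)
      obtain ⟨k, hk⟩ : δ ∣ d := hcond.2 ▸ Nat.gcd_dvd_left d u
      exact ⟨k, hk.symm⟩
    rw [← hinj.tsum_eq hsupp]
    have hterm : ∀ m : ℕ,
        (if Squarefree (δ * m) ∧ Nat.gcd (δ * m) u = δ then
          (moebius (δ * m) : ℝ) / ((δ * m : ℕ) : ℝ) ^ 2 else 0)
        = (moebius δ : ℝ) / (δ : ℝ) ^ 2 * mgAux u m := by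
      intro m
      by_cases hm : Nat.gcd m u = 1
      · have hmδ : Nat.Coprime δ m := (Nat.Coprime.coprime_dvd_right hδ hm).symm
        by_cases hsm : Squarefree m
        · have hsd : Squarefree (δ * m) := (Nat.squarefree_mul hmδ).mpr ⟨hδsq, hsm⟩
          have hgcd : Nat.gcd (δ * m) u = δ := by
            obtain ⟨v, rfl⟩ := hδ
            rw [Nat.gcd_mul_left,
              Nat.Coprime.gcd_eq_one (Nat.Coprime.coprime_dvd_right (dvd_mul_left v δ) hm),
              mul_one]
          rw [if_pos ⟨hsd, hgcd⟩, mgAux, if_pos hm,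
            isMultiplicative_moebius.map_mul_of_coprime hmδ]
          push_cast
          rw [mul_pow, ← div_mul_div_comm]
        · rw [if_neg, mgAux, if_pos hm, moebius_eq_zero_of_not_squarefree hsm]
          · simp
          · rintro ⟨hsd, -⟩
            exact hsm (Squarefree.squarefree_of_dvd (dvd_mul_left m δ) hsd)
      · rw [mgAux, if_neg hm, mul_zero, if_neg]
        rintro ⟨hsd, hgcd⟩
        obtain ⟨p, hp, hpd⟩ := Nat.exists_prime_and_dvd hm
        have hpm : p ∣ m := hpd.trans (Nat.gcd_dvd_left _ _)
        have hpu : p ∣ u := hpd.trans (Nat.gcd_dvd_right _ _)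
        have hpδ : p ∣ δ := hgcd ▸ Nat.dvd_gcd (Dvd.dvd.mul_left hpm δ) hpu
        have hpp : p * p ∣ δ * m := mul_dvd_mul hpδ hpm
        exact hp.ne_one (Nat.isUnit_iff.mp (hsd p hpp))
    rw [tsum_congr hterm, tsum_mul_left, mgAux_tsum_eq u hu0]
  · rw [moebius_eq_zero_of_not_squarefree hδsq]
    have hz : ∀ d : ℕ,
        (if Squarefree d ∧ Nat.gcd d u = δ then (moebius d : ℝ) / (d : ℝ) ^ 2 else 0) = 0 := by
      intro d
      rw [if_neg]
      rintro ⟨hsd, hgcd⟩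
      exact hδsq (Squarefree.squarefree_of_dvd (hgcd ▸ Nat.gcd_dvd_left d u) hsd)
    rw [tsum_congr hz, tsum_zero]
    simp
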